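/- arXiv:2405.13363 — 4 statements merged into one kernel-verified Lean document; each statement's English description precedes it below -/
import Mathlib

section
/- If D is a simple digraph in which every vertex has indegree at most 2 and outdegree at most 2, then every vertex of the competition-common enemy graph of D has degree at most 2; hence every connected component of CCE(D) is a path or a cycle. -/
open SimpleGraph

/-- A simple digraph given by its arc relation `A` has no loops, and every vertex has
outdegree at most 2 and indegree at most 2. -/
def IsTwoTwo {V : Type*} (A : V → V → Prop) : Prop :=
  (∀ v, ¬ A v v) ∧
  (∀ v a b c, A v a → A v b → A v c → a = b ∨ a = c ∨ b = c) ∧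
  (∀ v a b c, A a v → A b v → A c v → a = b ∨ a = c ∨ b = c)

/-- The competition-common enemy graph of a digraph with arc relation `A`. -/
def CCE {V : Type*} (A : V → V → Prop) : SimpleGraph V where
  Adj u v := u ≠ v ∧ (∃ x, A u x ∧ A v x) ∧ (∃ y, A y u ∧ A y v)
  symm := by
    constructor
    rintro u v ⟨h, ⟨x, hx1, hx2⟩, ⟨y, hy1, hy2⟩⟩
    exact ⟨h.symm, ⟨x, hx2, hx1⟩, ⟨y, hy2, hy1⟩⟩
  loopless := ⟨fun v h => h.1 rfl⟩

/-- The connected component `c` of `G` induces a (finite) path graph. -/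
def IsPathComponent {V : Type*} (G : SimpleGraph V) (c : G.ConnectedComponent) : Prop :=
  ∃ n : ℕ, Nonempty ((G.induce c.supp) ≃g pathGraph n)

/-- The connected component `c` of `G` induces a cycle of length at least 3. -/
def IsCycleComponent {V : Type*} (G : SimpleGraph V) (c : G.ConnectedComponent) : Prop :=
  ∃ n : ℕ, 3 ≤ n ∧ Nonempty ((G.induce c.supp) ≃g cycleGraph n)

/-- `G` is the CCE graph of some `⟨2,2⟩` digraph. -/
def IsTwoTwoCCE {V : Type*} (G : SimpleGraph V) : Prop :=
  ∃ (W : Type) (A : W → W → Prop), IsTwoTwo A ∧ Nonempty (G ≃g CCE A)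

/-- `A` is acyclic: it has no directed cycle. -/
def DigraphAcyclic {V : Type*} (A : V → V → Prop) : Prop :=
  ∀ v, ¬ Relation.TransGen A v v

/-- A `(2,2)` digraph: an acyclic `⟨2,2⟩` digraph. -/
def IsTwoTwoAcyclic {V : Type*} (A : V → V → Prop) : Prop :=
  IsTwoTwo A ∧ DigraphAcyclic A

/-- `G` is an interval graph. -/
def IsIntervalGraph {V : Type*} (G : SimpleGraph V) : Prop :=
  ∃ f : V → Set ℝ, (∀ v, ∃ a b : ℝ, f v = Set.Icc a b) ∧
    ∀ u v, u ≠ v → (G.Adj u v ↔ (f u ∩ f v).Nonempty)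

/-- `A` is a minimal `(2,2)` digraph realizing its CCE graph: no proper subdigraph on the
same vertex set has the same CCE graph. -/
def MinimalTwoTwoAcyclic {V : Type*} (A : V → V → Prop) : Prop :=
  IsTwoTwoAcyclic A ∧
    ∀ A' : V → V → Prop, (∀ u v, A' u v → A u v) → CCE A' = CCE A → ∀ u v, A u v → A' u v



section Helpers
variable {W : Type} {G : SimpleGraph W}

lemma aux_getVert_mem_support {a b : W} (p : G.Walk a b) {i : ℕ} (hi : i ≤ p.length) :
    p.getVert i ∈ p.support :=
  Walk.mem_support_iff_exists_getVert.2 ⟨i, rfl, hi⟩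

lemma aux_getVert_inj {a b : W} (p : G.Walk a b) :
    p.IsPath → ∀ i j, i ≤ p.length → j ≤ p.length → p.getVert i = p.getVert j → i = j := by
  induction p with
  | nil => intro _ i j hi hj _; simp only [Walk.length_nil, Nat.le_zero] at hi hj; omega
  | @cons u v w h q ih =>
    intro hp i j hi hj heq
    rw [Walk.cons_isPath_iff] at hp
    simp only [Walk.length_cons] at hi hj
    match i, j with
    | 0, 0 => rfl
    | 0, j + 1 =>
      exfalso
      rw [Walk.getVert_zero, Walk.getVert_cons_succ] at heq
      exact hp.2 (heq ▸ aux_getVert_mem_support q (by omega))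
    | i + 1, 0 =>
      exfalso
      rw [Walk.getVert_zero, Walk.getVert_cons_succ] at heq
      exact hp.2 (heq ▸ aux_getVert_mem_support q (by omega))
    | i + 1, j + 1 =>
      rw [Walk.getVert_cons_succ, Walk.getVert_cons_succ] at heq
      have := ih hp.1 i j (by omega) (by omega) heq
      omega

lemma aux_exit {s : Set W} {a b : W} (q : G.Walk a b) :
    a ∈ s → b ∉ s → ∃ z x, z ∈ s ∧ x ∉ s ∧ G.Adj z x := by
  induction q with
  | nil => intro h h'; exact absurd h h'
  | @cons u v w h q ih =>
    intro ha hb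
    by_cases hv : v ∈ s
    · exact ih hv hb
    · exact ⟨u, v, ha, hv, h⟩

lemma aux_walk_ind {s : Set W} {a b : W} (p : G.Walk a b) :
    ∀ (hs : ∀ x ∈ p.support, x ∈ s),
      (G.induce s).Reachable ⟨a, hs a p.start_mem_support⟩ ⟨b, hs b p.end_mem_support⟩ := by
  induction p with
  | nil => intro _; exact Reachable.refl _
  | @cons u v w h q ih =>
    intro hs
    have hu : u ∈ s := hs u (by simp)
    have hv : v ∈ s := hs v (by simp)
    have h1 : (G.induce s).Adj ⟨u, hu⟩ ⟨v, hv⟩ := h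
    exact (h1.reachable).trans (ih fun x hx => hs x (by simp [Walk.support_cons, hx]))

end Helpers

lemma aux_finsub {N : ℕ} (hN : 1 ≤ N) (a b : Fin (N + 1)) :
    (b - a).val = 1 ↔ (b.val = a.val + 1 ∨ (a.val = N ∧ b.val = 0)) := by
  have ha := a.isLt
  have hb := b.isLt
  rw [Fin.sub_def]
  simp only
  rcases Nat.lt_or_ge b.val a.val with h | h
  · rw [Nat.mod_eq_of_lt (by omega)]
    omega
  · have he : (N + 1 - a.val) + b.val = (N + 1) + (b.val - a.val) := by omega
    rw [he, Nat.add_mod_left, Nat.mod_eq_of_lt (by omega)]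
    omega

lemma aux_classify {W : Type} [Fintype W] [Nonempty W] (G : SimpleGraph W)
    (hdeg : ∀ v a b c, G.Adj v a → G.Adj v b → G.Adj v c → a = b ∨ a = c ∨ b = c)
    (hconn : G.Preconnected) :
    (∃ n, Nonempty (G ≃g pathGraph n)) ∨ (∃ n, 3 ≤ n ∧ Nonempty (G ≃g cycleGraph n)) := by
  classical
  set S : Set ℕ := {n | ∃ (u v : W) (p : G.Walk u v), p.IsPath ∧ p.length = n} with hS
  have hne : S.Nonempty := by
    refine ⟨0, Classical.arbitrary W, Classical.arbitrary W, Walk.nil, ?_, rfl⟩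
    exact Walk.IsPath.nil
  have hbdd : BddAbove S := by
    refine ⟨Fintype.card W, ?_⟩
    rintro n ⟨x, y, q, hq, rfl⟩
    exact hq.length_lt.le
  have hmem := Nat.sSup_mem hne hbdd
  set N := sSup S with hN
  obtain ⟨u, v, p, hp, hlen⟩ := hmem
  have hmax : ∀ {x y : W} (q : G.Walk x y), q.IsPath → q.length ≤ N :=
    fun q hq => le_csSup hbdd ⟨_, _, q, hq, rfl⟩
  -- spanning
  have hspan : ∀ w, w ∈ p.support := by
    by_contra hw
    push_neg at hw
    obtain ⟨w, hw⟩ := hw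
    obtain ⟨q⟩ := hconn u w
    obtain ⟨z, x, hz, hx, hzx⟩ :=
      aux_exit (s := {y | y ∈ p.support}) q p.start_mem_support hw
    obtain ⟨k, hk, hkle⟩ := Walk.mem_support_iff_exists_getVert.1 hz
    rcases Nat.eq_zero_or_pos k with hk0 | hkpos
    · subst hk0
      rw [Walk.getVert_zero] at hk
      subst hk
      have hpath : (Walk.cons hzx.symm p).IsPath := hp.cons hx
      have := hmax _ hpath
      simp only [Walk.length_cons] at this
      omega
    · rcases Nat.lt_or_ge k p.length with hklt | hkge
      · -- interior
        have h1 : G.Adj (p.getVert k) (p.getVert (k - 1)) := by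
          have := p.adj_getVert_succ (i := k - 1) (by omega)
          rw [show k - 1 + 1 = k by omega] at this
          exact this.symm
        have h2 : G.Adj (p.getVert k) (p.getVert (k + 1)) := p.adj_getVert_succ hklt
        have h3 : G.Adj (p.getVert k) x := hk ▸ hzx
        rcases hdeg _ _ _ _ h1 h2 h3 with h | h | h
        · have := aux_getVert_inj p hp (k - 1) (k + 1) (by omega) (by omega) h
          omega
        · exact hx (h ▸ aux_getVert_mem_support p (by omega))
        · exact hx (h ▸ aux_getVert_mem_support p (by omega))
      · -- k = length, z = v
        have hkeq : k = p.length := by omega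
        subst hkeq
        rw [Walk.getVert_length] at hk
        subst hk
        have hx' : x ∉ p.reverse.support := by
          rw [Walk.support_reverse]; simpa using hx
        have hpath : (Walk.cons hzx.symm p.reverse).IsPath := hp.reverse.cons hx'
        have := hmax _ hpath
        simp only [Walk.length_cons, Walk.length_reverse] at this
        omega
  -- bijection
  have hgetle : ∀ i : Fin (N + 1), (i : ℕ) ≤ p.length := fun i => by
    have := i.isLt; omega
  let f : Fin (N + 1) → W := fun i => p.getVert i
  have hinj : Function.Injective f := by
    intro i j hij
    exact Fin.ext (aux_getVert_inj p hp _ _ (hgetle i) (hgetle j) hij)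
  have hsurj : Function.Surjective f := by
    intro w
    obtain ⟨k, hk, hkle⟩ := Walk.mem_support_iff_exists_getVert.1 (hspan w)
    exact ⟨⟨k, by omega⟩, hk⟩
  let e : Fin (N + 1) ≃ W := Equiv.ofBijective f ⟨hinj, hsurj⟩
  -- chord lemma
  have chord : ∀ i j : ℕ, i + 1 < j → j ≤ N → G.Adj (p.getVert i) (p.getVert j) →
      i = 0 ∧ j = N := by
    intro i j hij hj hadj
    have hi0 : i = 0 := by
      by_contra h0
      have h1 : G.Adj (p.getVert i) (p.getVert (i - 1)) := by
        have := p.adj_getVert_succ (i := i - 1) (by omega)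
        rw [show i - 1 + 1 = i by omega] at this
        exact this.symm
      have h2 : G.Adj (p.getVert i) (p.getVert (i + 1)) := p.adj_getVert_succ (by omega)
      rcases hdeg _ _ _ _ h1 h2 hadj with h | h | h <;>
        · have := aux_getVert_inj p hp _ _ (by omega) (by omega) h
          omega
    subst hi0
    by_contra h0
    have hjN : j < N := by omega
    have h1 : G.Adj (p.getVert j) (p.getVert (j - 1)) := by
      have := p.adj_getVert_succ (i := j - 1) (by omega)
      rw [show j - 1 + 1 = j by omega] at this
      exact this.symm
    have h2 : G.Adj (p.getVert j) (p.getVert (j + 1)) := p.adj_getVert_succ (by omega)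
    rcases hdeg _ _ _ _ h1 h2 hadj.symm with h | h | h <;>
      · have := aux_getVert_inj p hp _ _ (by omega) (by omega) h
        omega
  have adj_iff : ∀ i j : ℕ, i < j → j ≤ N →
      (G.Adj (p.getVert i) (p.getVert j) ↔
        (j = i + 1 ∨ (i = 0 ∧ j = N ∧ G.Adj (p.getVert 0) (p.getVert N)))) := by
    intro i j hij hj
    constructor
    · intro hadj
      rcases Nat.eq_or_lt_of_le (by omega : i + 1 ≤ j) with h | h
      · exact Or.inl h.symm
      · obtain ⟨h0, hN'⟩ := chord i j h hj hadj
        exact Or.inr ⟨h0, hN', by rwa [h0, hN'] at hadj⟩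
    · rintro (rfl | ⟨rfl, rfl, hadj⟩)
      · exact p.adj_getVert_succ (by omega)
      · exact hadj
  by_cases hcyc : 2 ≤ N ∧ G.Adj (p.getVert 0) (p.getVert N)
  · right
    refine ⟨N + 1, by omega, ?_⟩
    have iso : cycleGraph (N + 1) ≃g G := by
      refine ⟨e, ?_⟩
      intro a b
      show G.Adj (p.getVert a) (p.getVert b) ↔ _
      rw [cycleGraph_adj', aux_finsub (by omega) b a, aux_finsub (by omega) a b]
      have ha := a.isLt
      have hb := b.isLt
      constructor
      · intro hadj
        rcases lt_trichotomy (a : ℕ) (b : ℕ) with h | h | h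
        · rcases (adj_iff a b h (by omega)).1 hadj with h' | ⟨h1, h2, _⟩
          · omega
          · omega
        · rw [show (a : ℕ) = (b : ℕ) from h] at hadj
          exact absurd rfl hadj.ne
        · rcases (adj_iff b a h (by omega)).1 hadj.symm with h' | ⟨h1, h2, _⟩
          · omega
          · omega
      · rintro (h | h)
        · rcases h with h | h
          · have := p.adj_getVert_succ (i := b) (by omega)
            rw [show (b : ℕ) + 1 = a by omega] at this
            exact this.symm
          · rw [show (a : ℕ) = 0 from h.2, show (b : ℕ) = N from h.1]
            exact hcyc.2
        · rcases h with h | h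
          · have := p.adj_getVert_succ (i := a) (by omega)
            rw [show (a : ℕ) + 1 = b by omega] at this
            exact this
          · rw [show (b : ℕ) = 0 from h.2, show (a : ℕ) = N from h.1]
            exact hcyc.2.symm
    exact ⟨iso.symm⟩
  · left
    refine ⟨N + 1, ?_⟩
    have iso : pathGraph (N + 1) ≃g G := by
      refine ⟨e, ?_⟩
      intro a b
      show G.Adj (p.getVert a) (p.getVert b) ↔ _
      rw [pathGraph_adj]
      have ha := a.isLt
      have hb := b.isLt
      constructor
      · intro hadj
        rcases lt_trichotomy (a : ℕ) (b : ℕ) with h | h | h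
        · rcases (adj_iff a b h (by omega)).1 hadj with h' | ⟨h1, h2, hadj'⟩
          · omega
          · rcases Nat.lt_or_ge N 2 with hN2 | hN2
            · omega
            · exact absurd ⟨hN2, hadj'⟩ hcyc
        · rw [show (a : ℕ) = (b : ℕ) from h] at hadj
          exact absurd rfl hadj.ne
        · rcases (adj_iff b a h (by omega)).1 hadj.symm with h' | ⟨h1, h2, hadj'⟩
          · omega
          · rcases Nat.lt_or_ge N 2 with hN2 | hN2
            · omega
            · exact absurd ⟨hN2, hadj'⟩ hcyc
      · rintro (h | h)
        · have := p.adj_getVert_succ (i := a) (by omega)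
          rw [show (a : ℕ) + 1 = b by omega] at this
          exact this
        · have := p.adj_getVert_succ (i := b) (by omega)
          rw [show (b : ℕ) + 1 = a by omega] at this
          exact this.symm
    exact ⟨iso.symm⟩

theorem stmt0 {V : Type} [Fintype V] (A : V → V → Prop) (hA : IsTwoTwo A) :
    (∀ v a b c, (CCE A).Adj v a → (CCE A).Adj v b → (CCE A).Adj v c →
      a = b ∨ a = c ∨ b = c) ∧
    (∀ c : (CCE A).ConnectedComponent,
      IsPathComponent (CCE A) c ∨ IsCycleComponent (CCE A) c) := by
  classical
  have hdeg : ∀ v a b c, (CCE A).Adj v a → (CCE A).Adj v b → (CCE A).Adj v c →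
      a = b ∨ a = c ∨ b = c := by
    intro v a b c hva hvb hvc
    obtain ⟨hav, ⟨xa, hvxa, haxa⟩, -⟩ := hva
    obtain ⟨hbv, ⟨xb, hvxb, hbxb⟩, -⟩ := hvb
    obtain ⟨hcv, ⟨xc, hvxc, hcxc⟩, -⟩ := hvc
    by_contra hne
    push_neg at hne
    obtain ⟨hab, hac, hbc⟩ := hne
    rcases hA.2.1 v xa xb xc hvxa hvxb hvxc with h | h | h
    · subst h
      rcases hA.2.2 xa a b v haxa hbxb hvxa with h | h | h
      · exact hab h
      · exact hav (h.symm)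
      · exact hbv (h.symm)
    · subst h
      rcases hA.2.2 xa a c v haxa hcxc hvxa with h | h | h
      · exact hac h
      · exact hav (h.symm)
      · exact hcv (h.symm)
    · subst h
      rcases hA.2.2 xb b c v hbxb hcxc hvxb with h | h | h
      · exact hbc h
      · exact hbv (h.symm)
      · exact hcv (h.symm)
  refine ⟨hdeg, ?_⟩
  intro c
  letI : Fintype c.supp := Fintype.ofFinite _
  obtain ⟨w, hw⟩ := c.exists_rep
  haveI : Nonempty c.supp := ⟨⟨w, by rw [ConnectedComponent.mem_supp_iff, ← hw]; rfl⟩⟩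
  have hpre : ((CCE A).induce c.supp).Preconnected := by
    rintro ⟨x, hx⟩ ⟨y, hy⟩
    rw [ConnectedComponent.mem_supp_iff] at hx hy
    have hr : (CCE A).Reachable x y := ConnectedComponent.exact (hx.trans hy.symm)
    obtain ⟨q⟩ := hr
    have hsupp : ∀ z ∈ q.support, z ∈ c.supp := by
      intro z hz
      rw [ConnectedComponent.mem_supp_iff, ← hx]
      exact ConnectedComponent.sound ⟨(q.takeUntil z hz).reverse⟩
    exact aux_walk_ind q hsupp
  have hdeg' : ∀ (v a b d : c.supp), ((CCE A).induce c.supp).Adj v a → ((CCE A).induce c.supp).Adj v b →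
      ((CCE A).induce c.supp).Adj v d → a = b ∨ a = d ∨ b = d := by
    intro v a b d h1 h2 h3
    have h1' : (CCE A).Adj v.val a.val := h1
    have h2' : (CCE A).Adj v.val b.val := h2
    have h3' : (CCE A).Adj v.val d.val := h3
    rcases hdeg v.val a.val b.val d.val h1' h2' h3' with h | h | h
    · exact Or.inl (Subtype.ext h)
    · exact Or.inr (Or.inl (Subtype.ext h))
    · exact Or.inr (Or.inr (Subtype.ext h))
  rcases aux_classify ((CCE A).induce c.supp) hdeg' hpre with ⟨n, hn⟩ | ⟨n, h3, hn⟩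
  · exact Or.inl ⟨n, hn⟩
  · exact Or.inr ⟨n, h3, hn⟩
end

section
/- For all positive integers m and n, the disjoint union of a path on m vertices and a path on n vertices is the CCE graph of some ⟨2,2⟩ digraph. -/
open SimpleGraph

-- auxiliary
def sumPos (m n : ℕ) : Fin m ⊕ Fin n → ℕ
  | Sum.inl i => i.val
  | Sum.inr j => m + j.val

def posArc (m n p q : ℕ) : Prop :=
  (p < m ∧ (q = p + n ∨ q = p + n + 1)) ∨
  (m ≤ p ∧ q < m ∧ (q + p = m + n ∨ q + p + 1 = m + n))

lemma sumPos_inj {m n : ℕ} : Function.Injective (sumPos m n) := by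
  rintro (i | j) (k | l) h <;> simp only [sumPos] at h
  · exact congrArg Sum.inl (Fin.ext h)
  · exact absurd h (by have := i.isLt; omega)
  · exact absurd h (by have := k.isLt; omega)
  · exact congrArg Sum.inr (Fin.ext (by omega))

lemma sumPos_lt {m n : ℕ} (u : Fin m ⊕ Fin n) : sumPos m n u < m + n := by
  rcases u with i | j
  · have := i.isLt; simp only [sumPos]; omega
  · have := j.isLt; simp only [sumPos]; omega

lemma exists_sumPos {m n : ℕ} (q : ℕ) (hq : q < m + n) :
    ∃ u : Fin m ⊕ Fin n, sumPos m n u = q := by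
  by_cases h : q < m
  · exact ⟨Sum.inl ⟨q, h⟩, rfl⟩
  · exact ⟨Sum.inr ⟨q - m, by omega⟩, by simp only [sumPos]; omega⟩

lemma adj_of_step (m n : ℕ) (hn : 1 ≤ n) (hnm : n ≤ m) (p p' : ℕ)
    (hp : p < m + n) (hp' : p' < m + n)
    (h : (p < m ∧ p' < m) ∨ (m ≤ p ∧ m ≤ p')) (hstep : p' = p + 1) :
    (∃ q, q < m + n ∧ posArc m n p q ∧ posArc m n p' q) ∧
    (∃ q, q < m + n ∧ posArc m n q p ∧ posArc m n q p') := by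
  constructor
  · by_cases hc : p + 1 < m
    · exact ⟨p + n + 1, by omega, by unfold posArc; omega, by unfold posArc; omega⟩
    · exact ⟨m + n - p - 1, by omega, by unfold posArc; omega, by unfold posArc; omega⟩
  · by_cases hc : n ≤ p
    · exact ⟨p - n, by omega, by unfold posArc; omega, by unfold posArc; omega⟩
    · exact ⟨m + n - p - 1, by omega, by unfold posArc; omega, by unfold posArc; omega⟩

lemma key (m n : ℕ) (hn : 1 ≤ n) (hnm : n ≤ m) :
    ∃ A : Fin m ⊕ Fin n → Fin m ⊕ Fin n → Prop, IsTwoTwo A ∧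
      ∀ u v, (CCE A).Adj u v ↔ (pathGraph m ⊕g pathGraph n).Adj u v := by
  refine ⟨fun u v => posArc m n (sumPos m n u) (sumPos m n v), ⟨?_, ?_, ?_⟩, ?_⟩
  · intro v hv
    unfold posArc at hv
    omega
  · intro v a b c ha hb hc
    have key3 : sumPos m n a = sumPos m n b ∨ sumPos m n a = sumPos m n c ∨
        sumPos m n b = sumPos m n c := by
      unfold posArc at ha hb hc
      omega
    rcases key3 with h | h | h
    · exact Or.inl (sumPos_inj h)
    · exact Or.inr (Or.inl (sumPos_inj h))
    · exact Or.inr (Or.inr (sumPos_inj h))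
  · intro v a b c ha hb hc
    have key3 : sumPos m n a = sumPos m n b ∨ sumPos m n a = sumPos m n c ∨
        sumPos m n b = sumPos m n c := by
      unfold posArc at ha hb hc
      omega
    rcases key3 with h | h | h
    · exact Or.inl (sumPos_inj h)
    · exact Or.inr (Or.inl (sumPos_inj h))
    · exact Or.inr (Or.inr (sumPos_inj h))
  · intro u v
    constructor
    · rintro ⟨hne, ⟨x, hx1, hx2⟩, ⟨y, hy1, hy2⟩⟩
      have hxl := sumPos_lt x
      have hyl := sumPos_lt y
      have hul := sumPos_lt u
      have hvl := sumPos_lt v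
      have hne' : sumPos m n u ≠ sumPos m n v := fun h => hne (sumPos_inj h)
      unfold posArc at hx1 hx2 hy1 hy2
      rcases u with i | j <;> rcases v with k | l <;>
        simp only [sumPos] at hx1 hx2 hy1 hy2 hne' hul hvl <;>
        simp only [SimpleGraph.sum_adj, pathGraph_adj]
      · omega
      · omega
      · omega
      · omega
    · intro hadj
      have hul := sumPos_lt u
      have hvl := sumPos_lt v
      have hcomp : ((sumPos m n u < m ∧ sumPos m n v < m) ∨
          (m ≤ sumPos m n u ∧ m ≤ sumPos m n v)) ∧
          (sumPos m n v = sumPos m n u + 1 ∨ sumPos m n u = sumPos m n v + 1) := by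
        rcases u with i | j <;> rcases v with k | l <;>
          simp only [SimpleGraph.sum_adj, pathGraph_adj] at hadj <;>
          simp only [sumPos]
        · have := i.isLt; have := k.isLt; omega
        · have := j.isLt; have := l.isLt; omega
      obtain ⟨hc, hs⟩ := hcomp
      have hne : u ≠ v := by
        intro h
        rw [h] at hs
        omega
      refine ⟨hne, ?_, ?_⟩
      · rcases hs with hs | hs
        · obtain ⟨⟨q, hq, h1, h2⟩, -⟩ := adj_of_step m n hn hnm _ _ hul hvl hc hs
          obtain ⟨x, hx⟩ := exists_sumPos q hq
          exact ⟨x, by show posArc m n _ (sumPos m n x); rw [hx]; exact h1,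
            by show posArc m n _ (sumPos m n x); rw [hx]; exact h2⟩
        · obtain ⟨⟨q, hq, h1, h2⟩, -⟩ := adj_of_step m n hn hnm _ _ hvl hul (by omega) hs
          obtain ⟨x, hx⟩ := exists_sumPos q hq
          exact ⟨x, by show posArc m n _ (sumPos m n x); rw [hx]; exact h2,
            by show posArc m n _ (sumPos m n x); rw [hx]; exact h1⟩
      · rcases hs with hs | hs
        · obtain ⟨-, ⟨q, hq, h1, h2⟩⟩ := adj_of_step m n hn hnm _ _ hul hvl hc hs
          obtain ⟨y, hy⟩ := exists_sumPos q hq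
          exact ⟨y, by show posArc m n (sumPos m n y) _; rw [hy]; exact h1,
            by show posArc m n (sumPos m n y) _; rw [hy]; exact h2⟩
        · obtain ⟨-, ⟨q, hq, h1, h2⟩⟩ := adj_of_step m n hn hnm _ _ hvl hul (by omega) hs
          obtain ⟨y, hy⟩ := exists_sumPos q hq
          exact ⟨y, by show posArc m n (sumPos m n y) _; rw [hy]; exact h2,
            by show posArc m n (sumPos m n y) _; rw [hy]; exact h1⟩


theorem stmt8 (m n : ℕ) (hm : 1 ≤ m) (hn : 1 ≤ n) :
    IsTwoTwoCCE (SimpleGraph.pathGraph m ⊕g SimpleGraph.pathGraph n) := by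
  rcases le_total n m with h | h
  · obtain ⟨A, h22, hadj⟩ := key m n hn h
    exact ⟨Fin m ⊕ Fin n, A, h22,
      ⟨⟨Equiv.refl _, by intro a b; exact hadj a b⟩⟩⟩
  · obtain ⟨A, h22, hadj⟩ := key n m hm h
    have e2 : (pathGraph n ⊕g pathGraph m) ≃g CCE A :=
      ⟨Equiv.refl _, by intro a b; exact hadj a b⟩
    exact ⟨Fin n ⊕ Fin m, A, h22, ⟨Iso.sumComm.trans e2⟩⟩
end

section
/- Let D be an acyclic ⟨2,2⟩ digraph (a (2,2) digraph) whose CCE graph is G. If C is a cycle in G, then D has no arc between any two vertices of C. -/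
open SimpleGraph

section Aux
variable {V : Type*} {G : SimpleGraph V}

lemma support_getElem? {u v : V} (p : G.Walk u v) {i : ℕ} (hi : i ≤ p.length) :
    p.support[i]? = some (p.getVert i) := by
  induction p generalizing i with
  | nil =>
    simp only [Walk.length_nil, Nat.le_zero] at hi
    subst hi
    simp [Walk.support_nil, Walk.getVert]
  | cons h q ih =>
    cases i with
    | zero => simp [Walk.support_cons, Walk.getVert]
    | succ n =>
      simp only [Walk.length_cons, Nat.add_le_add_iff_right] at hi
      simp only [Walk.support_cons, Walk.getVert_cons_succ, List.getElem?_cons_succ]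
      exact ih hi

lemma cycle_getVert_inj {v : V} {c : G.Walk v v} (hc : c.IsCycle) {i j : ℕ}
    (hi : i < c.length) (hj : j < c.length) (h : c.getVert i = c.getVert j) : i = j := by
  have hlen : c.support.tail.length = c.length := by
    have := c.length_support
    simp [List.length_tail, this]
  have htail : ∀ k, k < c.length → c.support.tail[k]? = some (c.getVert (k + 1)) := by
    intro k hk
    have hs := c.support_eq_cons
    have : c.support[k+1]? = some (c.getVert (k+1)) := support_getElem? c (by omega)
    rw [hs, List.getElem?_cons_succ] at this
    rw [hs]
    simpa using this
  have hinj : ∀ a b, 1 ≤ a → a ≤ c.length → 1 ≤ b → b ≤ c.length →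
      c.getVert a = c.getVert b → a = b := by
    intro a b ha1 ha2 hb1 hb2 hab
    have h1 : c.support.tail[a-1]? = c.support.tail[b-1]? := by
      rw [htail _ (by omega), htail _ (by omega)]
      have : a - 1 + 1 = a := by omega
      rw [this]
      have : b - 1 + 1 = b := by omega
      rw [this, hab]
    have := (List.getElem?_inj (by omega) hc.support_nodup).1 h1
    omega
  rcases Nat.eq_zero_or_pos i with hi0 | hi0
  · rcases Nat.eq_zero_or_pos j with hj0 | hj0
    · omega
    · subst hi0
      have h0 : c.getVert c.length = c.getVert j := by
        have hv : c.getVert c.length = c.getVert 0 := by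
          rw [c.getVert_length, c.getVert_zero]
        rw [hv, h]
      have := hinj c.length j (by omega) le_rfl (by omega) (by omega) h0
      omega
  · rcases Nat.eq_zero_or_pos j with hj0 | hj0
    · subst hj0
      have h0 : c.getVert i = c.getVert c.length := by
        have hv : c.getVert 0 = c.getVert c.length := by
          rw [c.getVert_length, c.getVert_zero]
        rw [← hv, ← h]
      have := hinj i c.length (by omega) (by omega) (by omega) le_rfl h0
      omega
    · exact hinj i j (by omega) (by omega) (by omega) (by omega) h

lemma cycle_adj_mod {v : V} (c : G.Walk v v) {i : ℕ} (hi : i < c.length) :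
    c.toSubgraph.Adj (c.getVert i) (c.getVert ((i + 1) % c.length)) := by
  have h1 := c.toSubgraph_adj_getVert hi
  rcases Nat.lt_or_ge (i + 1) c.length with hl | hg
  · rwa [Nat.mod_eq_of_lt hl]
  · have he : i + 1 = c.length := by omega
    have : (i + 1) % c.length = 0 := by rw [he, Nat.mod_self]
    have h2 : c.getVert (i + 1) = c.getVert 0 := by
      rw [he, c.getVert_length, c.getVert_zero]
    rw [this, ← h2]
    exact h1

lemma two_neighbors {v : V} {c : G.Walk v v} (hc : c.IsCycle) {x : V} (hx : x ∈ c.support) :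
    ∃ a b, a ≠ b ∧ c.toSubgraph.Adj x a ∧ c.toSubgraph.Adj x b := by
  have hn3 : 3 ≤ c.length := hc.three_le_length
  obtain ⟨i0, hgi0, hi0⟩ := Walk.mem_support_iff_exists_getVert.mp hx
  -- normalize to i < c.length
  obtain ⟨i, hi, hgi⟩ : ∃ i, i < c.length ∧ c.getVert i = x := by
    rcases Nat.lt_or_ge i0 c.length with h | h
    · exact ⟨i0, h, hgi0⟩
    · refine ⟨0, by omega, ?_⟩
      have : i0 = c.length := by omega
      rw [c.getVert_zero, ← c.getVert_length, ← this, hgi0]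
  set n := c.length with hn
  -- successor neighbor
  have hA1 : c.toSubgraph.Adj x (c.getVert ((i + 1) % n)) := by
    rw [← hgi]; exact cycle_adj_mod c hi
  -- predecessor neighbor
  have hjlt : (i + n - 1) % n < n := Nat.mod_lt _ (by omega)
  have hjval : (i + n - 1) % n = if i = 0 then n - 1 else i - 1 := by
    split_ifs with h0
    · subst h0; simp only [Nat.zero_add]; exact Nat.mod_eq_of_lt (by omega)
    · have : i + n - 1 = (i - 1) + n := by omega
      rw [this, Nat.add_mod_right]
      exact Nat.mod_eq_of_lt (by omega)
  have hsucc : ((i + n - 1) % n + 1) % n = i := by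
    rw [hjval]
    split_ifs with h0
    · have : n - 1 + 1 = n := by omega
      rw [this, Nat.mod_self, h0]
    · have : i - 1 + 1 = i := by omega
      rw [this]
      exact Nat.mod_eq_of_lt hi
  have hA2 : c.toSubgraph.Adj x (c.getVert ((i + n - 1) % n)) := by
    have := cycle_adj_mod c hjlt
    rw [hsucc, hgi] at this
    exact this.symm
  refine ⟨_, _, ?_, hA1, hA2⟩
  intro heq
  have h1lt : (i + 1) % n < n := Nat.mod_lt _ (by omega)
  have := cycle_getVert_inj hc h1lt hjlt heq
  have h1val : (i + 1) % n = if i + 1 = n then 0 else i + 1 := by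
    split_ifs with h0
    · rw [h0, Nat.mod_self]
    · exact Nat.mod_eq_of_lt (by omega)
  rw [h1val, hjval] at this
  split_ifs at this <;> omega

end Aux

section Main
variable {V : Type*} {A : V → V → Prop}

lemma tail_step (hA : IsTwoTwoAcyclic A) {v : V} {c : (CCE A).Walk v v}
    (hc : c.IsCycle) {x y : V}
    (hT : ∃ t, t ∈ c.support ∧ A x t) (hxy : c.toSubgraph.Adj x y) :
    ∃ t, t ∈ c.support ∧ A y t := by
  obtain ⟨⟨hnl, hout, hin⟩, hac⟩ := hA
  obtain ⟨w, hw, hAxw⟩ := hT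
  obtain ⟨w1, w2, hne, h1, h2⟩ := two_neighbors hc hw
  have g1 : (CCE A).Adj w w1 := h1.adj_sub
  have g2 : (CCE A).Adj w w2 := h2.adj_sub
  obtain ⟨y1, hy1w, hy1w1⟩ := g1.2.2
  obtain ⟨y2, hy2w, hy2w2⟩ := g2.2.2
  have key : ∃ a b, a ≠ b ∧ a ∈ c.support ∧ b ∈ c.support ∧ A x a ∧ A x b := by
    rcases hin w y1 y2 x hy1w hy2w hAxw with h | h | h
    · exfalso
      subst h
      rcases hout y1 w w1 w2 hy1w hy1w1 hy2w2 with h' | h' | h'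
      · exact g1.1 h'
      · exact g2.1 h'
      · exact hne h'
    · exact ⟨w, w1, g1.1, hw, (c.mem_verts_toSubgraph (w := w1)).mp h1.snd_mem, hAxw, h ▸ hy1w1⟩
    · exact ⟨w, w2, g2.1, hw, (c.mem_verts_toSubgraph (w := w2)).mp h2.snd_mem, hAxw, h ▸ hy2w2⟩
  obtain ⟨a, b, hab, ha, hb, hxa, hxb⟩ := key
  have gxy : (CCE A).Adj x y := hxy.adj_sub
  obtain ⟨z, hxz, hyz⟩ := gxy.2.1
  rcases hout x z a b hxz hxa hxb with h | h | h
  · exact ⟨a, ha, h ▸ hyz⟩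
  · exact ⟨b, hb, h ▸ hyz⟩
  · exact absurd h hab

end Main

theorem stmt14 {V : Type*} (A : V → V → Prop) (hA : IsTwoTwoAcyclic A) {v : V}
    (c : (CCE A).Walk v v) (hc : c.IsCycle) :
    ∀ u w, u ∈ c.support → w ∈ c.support → ¬ A u w := by
  intro u w hu hw hAuw
  -- every vertex of the cycle is the tail of an arc into the cycle
  have hT0 : ∃ t, t ∈ c.support ∧ A u t := ⟨w, hw, hAuw⟩
  have hprop : ∀ (a b : c.toSubgraph.verts) (p : c.toSubgraph.coe.Walk a b),
      (∃ t, t ∈ c.support ∧ A a.1 t) → ∃ t, t ∈ c.support ∧ A b.1 t := by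
    intro a b p
    induction p with
    | nil => exact id
    | @cons a' b' c' h q ih =>
      intro ha
      exact ih (tail_step hA hc ha h)
  have hall : ∀ x, x ∈ c.support → ∃ t, t ∈ c.support ∧ A x t := by
    intro x hx
    have hconn := c.toSubgraph_connected
    obtain ⟨p⟩ := hconn.preconnected ⟨u, (c.mem_verts_toSubgraph (w := u)).mpr hu⟩
      ⟨x, (c.mem_verts_toSubgraph (w := x)).mpr hx⟩
    exact hprop _ _ p hT0
  -- finiteness & acyclicity: take a maximal element
  have hfin : Finite {x // x ∈ c.support} := by
    have : {x | x ∈ c.support}.Finite := c.support.finite_toSet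
    exact this.to_subtype
  let r : {x // x ∈ c.support} → {x // x ∈ c.support} → Prop :=
    fun a b => Relation.TransGen A b.1 a.1
  have : IsTrans {x // x ∈ c.support} r := ⟨fun a b c hab hbc => hbc.trans hab⟩
  have : IsIrrefl {x // x ∈ c.support} r := ⟨fun a ha => hA.2 a.1 ha⟩
  have hwf : WellFounded r := Finite.wellFounded_of_trans_of_irrefl r
  obtain ⟨m, -, hmin⟩ := hwf.has_min Set.univ ⟨⟨u, hu⟩, trivial⟩
  obtain ⟨t, ht, hAt⟩ := hall m.1 m.2
  exact hmin ⟨t, ht⟩ trivial (Relation.TransGen.single hAt)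
end

section
/- Let D be a minimal (2,2) digraph realizing its CCE graph G. If a vertex v of D has exactly one in-neighbor, then v has degree exactly 1 in G. -/
open SimpleGraph

theorem stmt17 {V : Type*} (A : V → V → Prop) (hA : MinimalTwoTwoAcyclic A)
    (v : V) (hin : ∃! u, A u v) :
    ∃! w, (CCE A).Adj v w := by
  obtain ⟨u, huv, huniq⟩ := hin
  have key : ∀ w, (CCE A).Adj v w → A u w := by
    rintro w ⟨hne, hx, ⟨y, hyv, hyw⟩⟩
    rwa [huniq y hyv] at hyw
  have uniq : ∀ w₁ w₂, (CCE A).Adj v w₁ → (CCE A).Adj v w₂ → w₁ = w₂ := by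
    intro w₁ w₂ h1 h2
    rcases hA.1.1.2.1 u v w₁ w₂ huv (key w₁ h1) (key w₂ h2) with h | h | h
    · exact absurd h h1.1
    · exact absurd h h2.1
    · exact h
  have hex : ∃ w, (CCE A).Adj v w := by
    by_contra h
    push_neg at h
    set A' : V → V → Prop := fun a b => A a b ∧ ¬(a = u ∧ b = v) with hA'
    have hsub : ∀ a b, A' a b → A a b := fun a b hab => hab.1
    have hcce : CCE A' = CCE A := by
      ext a b
      constructor
      · rintro ⟨hne, ⟨x, hax, hbx⟩, ⟨y, hya, hyb⟩⟩
        exact ⟨hne, ⟨x, hax.1, hbx.1⟩, ⟨y, hya.1, hyb.1⟩⟩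
      · rintro ⟨hne, ⟨x, hax, hbx⟩, ⟨y, hya, hyb⟩⟩
        refine ⟨hne, ⟨x, ⟨hax, ?_⟩, ⟨hbx, ?_⟩⟩, ⟨y, ⟨hya, ?_⟩, ⟨hyb, ?_⟩⟩⟩
        · rintro ⟨rfl, rfl⟩
          exact hne (huniq b hbx).symm
        · rintro ⟨rfl, rfl⟩
          exact hne (huniq a hax)
        · rintro ⟨rfl, rfl⟩
          exact h b ⟨hne, ⟨x, hax, hbx⟩, ⟨y, hya, hyb⟩⟩
        · rintro ⟨rfl, rfl⟩
          exact h a ⟨hne.symm, ⟨x, hbx, hax⟩, ⟨y, hyb, hya⟩⟩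
    exact (hA.2 A' hsub hcce u v huv).2 ⟨rfl, rfl⟩
  obtain ⟨w, hw⟩ := hex
  exact ⟨w, hw, fun w' hw' => uniq w' w hw' hw⟩
end
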